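/- Let q be a prime power, d ∈ F_q, and let W be the infinite upper-triangular matrix over F_q indexed by nonnegative integers with W_{ij} = C(j,i) d^{j-i} for j ≥ i (and 0 otherwise). For j ≥ 0, let 𝔐_j = Σ_{i≥0} ε_{i, q(i+1)-1-j} (where ε_{ab} is the elementary matrix, zero if the column index is negative). Then 𝔐_0 W = W 𝔐_0; i.e., the 'q-power extraction' matrix 𝔐_0 commutes with the Pascal shift matrix W. -/
import Mathlib

lemma lucasA (p : ℕ) (hp : p.Prime) : ∀ (s m i : ℕ),
    (p ^ s * m + (p ^ s - 1)).choose (p ^ s * i + (p ^ s - 1)) ≡ m.choose i [MOD p] := by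
  haveI : Fact p.Prime := ⟨hp⟩
  intro s
  induction s with
  | zero => intro m i; simp [Nat.ModEq.refl]
  | succ s ih =>
    intro m i
    have hP : 1 ≤ p ^ s := Nat.one_le_pow _ _ hp.pos
    have hplt : p - 1 < p := Nat.sub_lt hp.pos one_pos
    have hPP : 1 ≤ p * p ^ s := Nat.mul_pos hp.pos hP
    have hpow : p ^ (s + 1) = p * p ^ s := by ring
    have hrep : ∀ a : ℕ, p ^ (s + 1) * a + (p ^ (s + 1) - 1)
        = p * (p ^ s * a + (p ^ s - 1)) + (p - 1) := by
      intro a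
      zify [hP, hPP, hp.one_le, hpow]
      ring
    have key := @Choose.choose_modEq_choose_mod_mul_choose_div_nat
      (p ^ (s + 1) * m + (p ^ (s + 1) - 1)) (p ^ (s + 1) * i + (p ^ (s + 1) - 1)) p ⟨hp⟩
    rw [hrep m, hrep i, Nat.mul_add_mod, Nat.mul_add_mod, Nat.mul_add_div hp.pos,
      Nat.mul_add_div hp.pos,
      Nat.mod_eq_of_lt hplt, Nat.div_eq_of_lt hplt,
      Nat.choose_self, one_mul, add_zero, add_zero, ← hrep m, ← hrep i] at key
    exact key.trans (ih m i)

lemma lucasB (p : ℕ) (hp : p.Prime) : ∀ (s l i : ℕ), l % p ^ s ≠ p ^ s - 1 →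
    l.choose (p ^ s * i + (p ^ s - 1)) ≡ 0 [MOD p] := by
  haveI : Fact p.Prime := ⟨hp⟩
  intro s
  induction s with
  | zero => intro l i h; exact absurd (Nat.mod_one l) h
  | succ s ih =>
    intro l i h
    have hP : 1 ≤ p ^ s := Nat.one_le_pow _ _ hp.pos
    have hplt : p - 1 < p := Nat.sub_lt hp.pos one_pos
    have hPP : 1 ≤ p * p ^ s := Nat.mul_pos hp.pos hP
    have hpow : p ^ (s + 1) = p * p ^ s := by ring
    have hrep : p ^ (s + 1) * i + (p ^ (s + 1) - 1)
        = p * (p ^ s * i + (p ^ s - 1)) + (p - 1) := by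
      zify [hP, hPP, hp.one_le, hpow]
      ring
    have key := @Choose.choose_modEq_choose_mod_mul_choose_div_nat
      l (p ^ (s + 1) * i + (p ^ (s + 1) - 1)) p ⟨hp⟩
    rw [hrep, Nat.mul_add_mod, Nat.mul_add_div hp.pos,
      Nat.mod_eq_of_lt hplt, Nat.div_eq_of_lt hplt,
      add_zero, ← hrep] at key
    by_cases hlp : l % p = p - 1
    · have h1 : l = l % p + p * (l / p % p ^ s) + (p * p ^ s) * (l / p / p ^ s) := by
        conv_lhs => rw [← Nat.mod_add_div l p, ← Nat.mod_add_div (l / p) (p ^ s)]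
        ring
      have h2 : l % p < p := Nat.mod_lt _ hp.pos
      have h3 : l / p % p ^ s < p ^ s := Nat.mod_lt _ (by positivity)
      have h4 : p * (l / p % p ^ s) ≤ p * (p ^ s - 1) := Nat.mul_le_mul_left _ (by omega)
      have h5 : p * (p ^ s - 1) + p = p * p ^ s := by zify [hP]; ring
      have hlt : l % p + p * (l / p % p ^ s) < p * p ^ s := by omega
      have hmod : l % p ^ (s + 1) = p * (l / p % p ^ s) + l % p := by
        rw [hpow]
        conv_lhs => rw [h1]
        rw [Nat.add_mul_mod_self_left, Nat.mod_eq_of_lt hlt, add_comm]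
      have hne : l / p % p ^ s ≠ p ^ s - 1 := by
        intro hc
        apply h
        rw [hmod, hc, hlp]
        zify [hP, hPP, hp.one_le, hpow]
        ring
      calc l.choose (p ^ (s + 1) * i + (p ^ (s + 1) - 1))
          ≡ (l % p).choose (p - 1) * (l / p).choose (p ^ s * i + (p ^ s - 1)) [MOD p] := key
        _ ≡ (l % p).choose (p - 1) * 0 [MOD p] := Nat.ModEq.mul_left _ (ih (l / p) i hne)
        _ = 0 := mul_zero _
    · have hlt : l % p < p - 1 := by
        have := Nat.mod_lt l hp.pos; omega
      calc l.choose (p ^ (s + 1) * i + (p ^ (s + 1) - 1))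
          ≡ (l % p).choose (p - 1) * (l / p).choose (p ^ s * i + (p ^ s - 1)) [MOD p] := key
        _ = 0 := by rw [Nat.choose_eq_zero_of_lt hlt, zero_mul]

theorem stmt_15 (p s q : ℕ) (hp : p.Prime) (hs : 1 ≤ s) (hq : q = p ^ s)
    (F : Type) [Field F] [Fintype F] (hF : Fintype.card F = q)
    (d : F)
    (W M0 : ℕ → ℕ → F)
    (hW : ∀ i j, W i j = if i ≤ j then (j.choose i : F) * d ^ (j - i) else 0)
    (hM0 : ∀ i l, M0 i l = if l + 1 = q * (i + 1) then 1 else 0) :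
    ∀ i l : ℕ,
      (∑ t ∈ Finset.range (q * (i + 1) + l + 1), M0 i t * W t l)
        = ∑ t ∈ Finset.range (q * (i + 1) + l + 1), W i t * M0 t l := by
  -- setup
  have hq1 : 1 ≤ q := by rw [hq]; exact Nat.one_le_pow _ _ hp.pos
  haveI hcharF : CharP F p := by
    haveI := ringChar.charP F
    have hrp : (ringChar F).Prime := CharP.char_is_prime F (ringChar F)
    obtain ⟨n, -, hn2⟩ := FiniteField.card F (ringChar F)
    have hdvd : ringChar F ∣ p ^ s := by
      rw [← hq, ← hF, hn2]
      exact dvd_pow_self _ n.pos.ne'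
    have : ringChar F = p := (Nat.prime_dvd_prime_iff_eq hrp hp).mp (hrp.dvd_of_dvd_pow hdvd)
    exact this ▸ ringChar.charP F
  have hdq : ∀ a : F, a ^ q = a := by
    intro a; rw [← hF]; exact FiniteField.pow_card a
  intro i l
  have hQ1 : 1 ≤ q * (i + 1) := Nat.mul_pos hq1 (Nat.succ_pos i)
  -- LHS collapse
  have hL : (∑ t ∈ Finset.range (q * (i + 1) + l + 1), M0 i t * W t l)
      = W (q * (i + 1) - 1) l := by
    rw [Finset.sum_eq_single (q * (i + 1) - 1)]
    · rw [hM0, if_pos (by omega), one_mul]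
    · intro t ht hne
      rw [hM0, if_neg (by omega), zero_mul]
    · intro habs
      exact absurd (Finset.mem_range.mpr (by omega)) habs
  rw [hL]
  by_cases hdvd : q ∣ (l + 1)
  · obtain ⟨c, hc⟩ := hdvd
    obtain ⟨m, rfl⟩ : ∃ m, c = m + 1 := by
      refine ⟨c - 1, ?_⟩
      rcases Nat.eq_zero_or_pos c with h0 | h1
      · subst h0; simp at hc
      · omega
    have hqm : q * (m + 1) = q * m + q := by ring
    have hR : (∑ t ∈ Finset.range (q * (i + 1) + l + 1), W i t * M0 t l) = W i m := by
      rw [Finset.sum_eq_single m]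
      · rw [hM0, if_pos hc, mul_one]
      · intro t ht hne
        have hne2 : ¬ (l + 1 = q * (t + 1)) := by
          intro hcontr
          have := Nat.eq_of_mul_eq_mul_left (show 0 < q by omega) (hc.symm.trans hcontr)
          omega
        rw [hM0, if_neg hne2, mul_zero]
      · intro habs
        have : m + 1 ≤ q * (m + 1) := Nat.le_mul_of_pos_left _ hq1
        exact absurd (Finset.mem_range.mpr (by omega)) habs
    rw [hR, hW, hW]
    by_cases him : i ≤ m
    · obtain ⟨k, rfl⟩ := Nat.exists_eq_add_of_le him
      have hqik : q * (i + k + 1) = q * (i + 1) + q * k := by ring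
      have hle : q * (i + 1) - 1 ≤ l := by omega
      rw [if_pos hle, if_pos (Nat.le_add_right i k)]
      have e1 : l - (q * (i + 1) - 1) = q * k := by omega
      have e2 : i + k - i = k := by omega
      rw [e1, e2]
      have hbin : ((l.choose (q * (i + 1) - 1) : ℕ) : F) = ((i + k).choose i : F) := by
        have hqik2 : q * (i + k + 1) = q * (i + k) + q := by ring
        have hl2 : l = q * (i + k) + (q - 1) := by omega
        have hk2 : q * (i + 1) - 1 = q * i + (q - 1) := by
          have : q * (i + 1) = q * i + q := by ring
          omega
        rw [hl2, hk2, hq]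
        exact (CharP.natCast_eq_natCast F p).mpr (lucasA p hp s (i + k) i)
      rw [hbin]
      have hdk : d ^ (q * k) = d ^ k := by
        rw [mul_comm, pow_mul, hdq]
      rw [hdk]
    · have hnle : ¬ (q * (i + 1) - 1 ≤ l) := by
        intro hle
        apply him
        have h1 : q * (i + 1) ≤ q * (m + 1) := by omega
        have := Nat.le_of_mul_le_mul_left h1 (by omega : 0 < q)
        omega
      rw [if_neg hnle, if_neg him]
  · have hR0 : (∑ t ∈ Finset.range (q * (i + 1) + l + 1), W i t * M0 t l) = 0 := by
      refine Finset.sum_eq_zero fun t ht => ?_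
      rw [hM0, if_neg (fun hcontr => hdvd ⟨t + 1, hcontr⟩), mul_zero]
    rw [hR0, hW]
    by_cases hle : q * (i + 1) - 1 ≤ l
    · rw [if_pos hle]
      have hlmod : l % q ≠ q - 1 := by
        intro hm
        apply hdvd
        have hdm := Nat.div_add_mod l q
        have : q * (l / q + 1) = q * (l / q) + q := by ring
        exact ⟨l / q + 1, by omega⟩
      have hbin0 : ((l.choose (q * (i + 1) - 1) : ℕ) : F) = 0 := by
        have hk2 : q * (i + 1) - 1 = q * i + (q - 1) := by
          have : q * (i + 1) = q * i + q := by ring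
          omega
        rw [hk2, hq, CharP.cast_eq_zero_iff F p]
        exact (Nat.modEq_zero_iff_dvd).mp (lucasB p hp s l i (by rw [← hq]; exact hlmod))
      rw [hbin0, zero_mul]
    · rw [if_neg hle]
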